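/- Let Ω ⊂ R^n be compact, Π = span(φ_1,...,φ_d) with φ_1 ≡ 1, φ_2 = x_1,...,φ_{n+1} = x_n monomials, and T(x) = (φ_2(x),...,φ_d(x)). Let P : C(Ω) → Π be the interpolation projector with admissible nodes x^(1),...,x^(d) ∈ Ω, and let P̄ : C(T(Ω)) → Π_1(R^{d−1}) be the linear interpolation projector with nodes y^(j) = T(x^(j)) (assumed affinely independent). Then ‖P̄‖_{T(Ω)} = ‖P‖_Ω. -/

import Mathlib

/-- A function `ℝ^n → ℝ` is a monomial if it has the form `x ↦ ∏ xᵢ^{αᵢ}`. -/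
def IsMonomial {n : ℕ} (φ : (Fin n → ℝ) → ℝ) : Prop :=
  ∃ α : Fin n → ℕ, ∀ x, φ x = ∏ i, x i ^ α i


theorem linear_proj_norm_eq_poly_proj_norm {n m : ℕ} (hn : n ≤ m)
    (Ω : Set (Fin n → ℝ)) (hΩ : IsCompact Ω)
    (φ : Fin (m+1) → ((Fin n → ℝ) → ℝ))
    (hmono : ∀ i, IsMonomial (φ i))
    (hind : LinearIndependent ℝ φ)
    (h1 : ∀ x, φ 0 x = 1)
    (hcoord : ∀ (j : Fin n) (x : Fin n → ℝ),
      φ ⟨(j : ℕ) + 1, by have := j.isLt; omega⟩ x = x j)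
    (nodes : Fin (m+1) → (Fin n → ℝ)) (hnodes : ∀ j, nodes j ∈ Ω)
    (hadm : (Matrix.of fun i j => φ i (nodes j)).det ≠ 0)
    (lam : Fin (m+1) → ((Fin n → ℝ) → ℝ))
    (hspan : ∀ j, lam j ∈ Submodule.span ℝ (Set.range φ))
    (hdelta : ∀ j k, lam j (nodes k) = if j = k then 1 else 0)
    (T : (Fin n → ℝ) → (Fin m → ℝ)) (hT : ∀ x i, T x i = φ i.succ x)
    (hSimp : AffineIndependent ℝ (fun j => T (nodes j)))
    (mu : Fin (m+1) → ((Fin m → ℝ) →ᵃ[ℝ] ℝ))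
    (hmu : ∀ j k, mu j (T (nodes k)) = if j = k then 1 else 0) :
    sSup {s : ℝ | ∃ y ∈ T '' Ω, s = ∑ j, |mu j y|} =
      sSup {s : ℝ | ∃ x ∈ Ω, s = ∑ j, |lam j x|} := by
  classical
  -- Key: μ_j ∘ T = λ_j everywhere.
  have key : ∀ j x, (mu j) (T x) = lam j x := by
    intro j
    -- μ_j ∘ T lies in the span of φ
    have hg : (fun x => (mu j) (T x)) ∈ Submodule.span ℝ (Set.range φ) := by
      have heq : (fun x => (mu j) (T x))
          = (mu j 0) • φ 0 + ∑ i : Fin m, ((mu j).linear (fun k => if i = k then 1 else 0)) • φ i.succ := by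
        funext x
        have hdec : (mu j) (T x) = (mu j).linear (T x) + (mu j) 0 := by
          rw [AffineMap.decomp (mu j)]; simp
        have hlin : (mu j).linear (T x)
            = ∑ i, T x i • (mu j).linear (fun k => if i = k then 1 else 0) :=
          LinearMap.pi_apply_eq_sum_univ (mu j).linear (T x)
        simp only [Pi.add_apply, Pi.smul_apply, Finset.sum_apply, smul_eq_mul]
        rw [hdec, hlin, h1 x]
        rw [add_comm, mul_one]
        congr 1
        exact Finset.sum_congr rfl fun i _ => by rw [hT x i, smul_eq_mul, mul_comm]
      rw [heq]
      refine Submodule.add_mem _ (Submodule.smul_mem _ _ (Submodule.subset_span ⟨0, rfl⟩)) ?_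
      exact Submodule.sum_mem _ fun i _ =>
        Submodule.smul_mem _ _ (Submodule.subset_span ⟨i.succ, rfl⟩)
    -- difference lies in span and vanishes on nodes
    have hd : (fun x => lam j x - (mu j) (T x)) ∈ Submodule.span ℝ (Set.range φ) := by
      have := Submodule.sub_mem _ (hspan j) hg
      convert this using 1
      rfl
    obtain ⟨c, hc⟩ := (Submodule.mem_span_range_iff_exists_fun ℝ).mp hd
    have hM : Matrix.vecMul c (Matrix.of fun i k => φ i (nodes k)) = 0 := by
      funext k
      have h0 : lam j (nodes k) - (mu j) (T (nodes k)) = 0 := by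
        rw [hdelta j k, hmu j k]; ring
      have := congrFun hc (nodes k)
      simp only [Finset.sum_apply, Pi.smul_apply, smul_eq_mul] at this
      rw [h0] at this
      simpa [Matrix.vecMul, dotProduct] using this
    have hc0 : c = 0 := by
      have h2 : Matrix.vecMul (Matrix.vecMul c (Matrix.of fun i k => φ i (nodes k)))
          (Matrix.of fun i k => φ i (nodes k))⁻¹ = c := by
        rw [Matrix.vecMul_vecMul, Matrix.mul_nonsing_inv _ (Ne.isUnit hadm), Matrix.vecMul_one]
      rw [hM, Matrix.zero_vecMul] at h2
      exact h2.symm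
    intro x
    have := congrFun hc x
    simp only [hc0, Finset.sum_apply, Pi.smul_apply, Pi.zero_apply, zero_smul,
      Finset.sum_const_zero] at this
    linarith [this]
  have hsets : {s : ℝ | ∃ y ∈ T '' Ω, s = ∑ j, |mu j y|}
      = {s : ℝ | ∃ x ∈ Ω, s = ∑ j, |lam j x|} := by
    ext s
    simp only [Set.mem_setOf_eq, Set.mem_image]
    constructor
    · rintro ⟨y, ⟨x, hx, rfl⟩, rfl⟩
      exact ⟨x, hx, by simp only [key]⟩
    · rintro ⟨x, hx, rfl⟩
      exact ⟨T x, ⟨x, hx, rfl⟩, by simp only [key]⟩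
  rw [hsets]
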